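/- Let n ∈ ℕ, n ≥ 1. Let η : Fin n → Fin n → ℝ be nonnegative interaction rates, B : Fin n → Fin n → Fin n → ℝ nonnegative transition probabilities satisfying ∑_{i} B i h k = 1 for all h, k, let μ : Fin n → Fin n → ℝ → ℝ and λ : Fin n → ℝ → ℝ be continuous on [0, ∞). Assume there exist constants η̄ > 0, μ̄ > 0, λ̄ > 0 such that η h k ≤ η̄ for all h, k, μ h k t ≤ μ̄ for all h, k and all t > 0, and |λ i t| ≤ λ̄ for all i and all t > 0. Let f⁰ : Fin n → ℝ with f⁰ i ≥ 0 for all i. Then there exists t₀ > 0 and a unique function f : ℝ → (Fin n → ℝ), differentiable on [0, t₀], with f 0 = f⁰, satisfying for all t ∈ [0, t₀] and all i the system (f i)'(t) = ∑_{h,k} η h k · B i h k · f h t · f k t − f i t · ∑_{k} η i k · f k t + f i t · ∑_{k} η i k · μ i k t · f k t + λ i t · f i t; moreover f i t ≥ 0 for all i and all t ∈ [0, t₀], and f is bounded on [0, t₀]. -/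

import Mathlib

open Set Topology Filter

namespace Stmt0Aux

lemma sum_abs_le {n : ℕ} (g : Fin n → ℝ) (c : ℝ) (h : ∀ k, |g k| ≤ c) :
    |∑ k, g k| ≤ n * c := by
  calc |∑ k, g k| ≤ ∑ k, |g k| := Finset.abs_sum_le_sum_abs _ _
    _ ≤ ∑ _k : Fin n, c := Finset.sum_le_sum fun k _ => h k
    _ = n * c := by simp [Finset.sum_const, nsmul_eq_mul]

lemma contOn_sum {ι : Type*} (s : Finset ι) {F : ι → ℝ → ℝ} {t : Set ℝ}
    (h : ∀ i ∈ s, ContinuousOn (F i) t) :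
    ContinuousOn (fun x => ∑ i ∈ s, F i x) t :=
  fun x hx => tendsto_finset_sum _ fun i hi => h i hi x hx

lemma prod_est {a b a' b' R₁ R₂ d₁ d₂ : ℝ} (ha : |a| ≤ R₁) (hb' : |b'| ≤ R₂)
    (h1 : |a - a'| ≤ d₁) (h2 : |b - b'| ≤ d₂) : |a * b - a' * b'| ≤ R₁ * d₂ + R₂ * d₁ := by
  have key : a * b - a' * b' = a * (b - b') + b' * (a - a') := by ring
  rw [key]
  calc |a * (b - b') + b' * (a - a')| ≤ |a * (b - b')| + |b' * (a - a')| := abs_add_le _ _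
    _ = |a| * |b - b'| + |b'| * |a - a'| := by rw [abs_mul, abs_mul]
    _ ≤ R₁ * d₂ + R₂ * d₁ := by
        have hR₁ : (0:ℝ) ≤ R₁ := (abs_nonneg _).trans ha
        have hR₂ : (0:ℝ) ≤ R₂ := (abs_nonneg _).trans hb'
        exact add_le_add (mul_le_mul ha h2 (abs_nonneg _) hR₁)
          (mul_le_mul hb' h1 (abs_nonneg _) hR₂)

/-- The polynomial vector field. -/
def Q {n : ℕ} (η : Fin n → Fin n → ℝ) (B : Fin n → Fin n → Fin n → ℝ)
    (c : Fin n → Fin n → ℝ) (l : Fin n → ℝ) (z : Fin n → ℝ) : Fin n → ℝ :=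
  fun i => (∑ h, ∑ k, η h k * B i h k * z h * z k) - z i * (∑ k, η i k * z k)
    + z i * (∑ k, η i k * c i k * z k) + l i * z i

section Est
variable {n : ℕ} {η : Fin n → Fin n → ℝ} {B : Fin n → Fin n → Fin n → ℝ}
    {c : Fin n → Fin n → ℝ} {l : Fin n → ℝ} {ηbar Mc R : ℝ}
    (hη : ∀ h k, 0 ≤ η h k) (hηle : ∀ h k, η h k ≤ ηbar) (hηb : 0 ≤ ηbar)
    (hB : ∀ i h k, 0 ≤ B i h k) (hB1 : ∀ i h k, B i h k ≤ 1)
    (hc : ∀ i k, |c i k| ≤ Mc) (hl : ∀ i, |l i| ≤ Mc)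
    (hR : 0 ≤ R) (hMc : 0 ≤ Mc)

/-- Bound for the vector field. -/
def Cbnd (n : ℕ) (ηbar Mc R : ℝ) : ℝ :=
  (n:ℝ) * ((n:ℝ) * (ηbar * R * R)) + R * ((n:ℝ) * (ηbar * R))
    + R * ((n:ℝ) * (ηbar * (Mc * R))) + Mc * R

/-- Lipschitz constant for the vector field. -/
def Kbnd (n : ℕ) (ηbar Mc R : ℝ) : ℝ :=
  (n:ℝ) * ((n:ℝ) * (ηbar * (R + R)))
    + (R * ((n:ℝ) * ηbar) + (n:ℝ) * (ηbar * R))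
    + (R * ((n:ℝ) * (ηbar * Mc)) + (n:ℝ) * (ηbar * (Mc * R)))
    + Mc

include hη hηle hηb hB hB1 hc hl hR hMc in
lemma Q_bound {z : Fin n → ℝ} (hz : ∀ j, |z j| ≤ R) (i : Fin n) :
    |Q η B c l z i| ≤ Cbnd n ηbar Mc R := by
  have h1 : |∑ h, ∑ k, η h k * B i h k * z h * z k| ≤ (n:ℝ) * ((n:ℝ) * (ηbar * R * R)) := by
    apply sum_abs_le
    intro h
    apply sum_abs_le
    intro k
    rw [abs_mul, abs_mul, abs_mul, abs_of_nonneg (hη h k), abs_of_nonneg (hB i h k)]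
    have hb1 : η h k * B i h k ≤ ηbar := by nlinarith [hη h k, hηle h k, hB i h k, hB1 i h k]
    have hb2 : η h k * B i h k * |z h| ≤ ηbar * R :=
      mul_le_mul hb1 (hz h) (abs_nonneg _) hηb
    exact mul_le_mul hb2 (hz k) (abs_nonneg _) (by positivity)
  have hS : |∑ k, η i k * z k| ≤ (n:ℝ) * (ηbar * R) := by
    apply sum_abs_le
    intro k
    rw [abs_mul, abs_of_nonneg (hη i k)]
    exact mul_le_mul (hηle i k) (hz k) (abs_nonneg _) hηb
  have hT : |∑ k, η i k * c i k * z k| ≤ (n:ℝ) * (ηbar * (Mc * R)) := by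
    apply sum_abs_le
    intro k
    rw [abs_mul, abs_mul, abs_of_nonneg (hη i k)]
    have h' : η i k * |c i k| ≤ ηbar * Mc := mul_le_mul (hηle i k) (hc i k) (abs_nonneg _) hηb
    calc η i k * |c i k| * |z k| ≤ ηbar * Mc * R :=
          mul_le_mul h' (hz k) (abs_nonneg _) (by positivity)
      _ = ηbar * (Mc * R) := by ring
  have h2 : |z i * (∑ k, η i k * z k)| ≤ R * ((n:ℝ) * (ηbar * R)) := by
    rw [abs_mul]; exact mul_le_mul (hz i) hS (abs_nonneg _) hR
  have h3 : |z i * (∑ k, η i k * c i k * z k)| ≤ R * ((n:ℝ) * (ηbar * (Mc * R))) := by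
    rw [abs_mul]; exact mul_le_mul (hz i) hT (abs_nonneg _) hR
  have h4 : |l i * z i| ≤ Mc * R := by
    rw [abs_mul]; exact mul_le_mul (hl i) (hz i) (abs_nonneg _) hMc
  calc |Q η B c l z i| ≤ |(∑ h, ∑ k, η h k * B i h k * z h * z k) - z i * (∑ k, η i k * z k)
        + z i * (∑ k, η i k * c i k * z k)| + |l i * z i| := abs_add_le _ _
    _ ≤ (|(∑ h, ∑ k, η h k * B i h k * z h * z k) - z i * (∑ k, η i k * z k)|
        + |z i * (∑ k, η i k * c i k * z k)|) + |l i * z i| := by gcongr; exact abs_add_le _ _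
    _ ≤ ((|∑ h, ∑ k, η h k * B i h k * z h * z k| + |z i * (∑ k, η i k * z k)|)
        + |z i * (∑ k, η i k * c i k * z k)|) + |l i * z i| := by gcongr; exact abs_sub _ _
    _ ≤ _ := by unfold Cbnd; gcongr

include hη hηle hηb hB hB1 hc hl hR hMc in
lemma Q_lip {z w : Fin n → ℝ} {d : ℝ} (hz : ∀ j, |z j| ≤ R) (hw : ∀ j, |w j| ≤ R)
    (hzw : ∀ j, |z j - w j| ≤ d) (i : Fin n) :
    |Q η B c l z i - Q η B c l w i| ≤ Kbnd n ηbar Mc R * d := by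
  have hd : 0 ≤ d := (abs_nonneg _).trans (hzw i)
  have e1 : |(∑ h, ∑ k, η h k * B i h k * z h * z k) - (∑ h, ∑ k, η h k * B i h k * w h * w k)|
      ≤ (n:ℝ) * ((n:ℝ) * (ηbar * (R * d + R * d))) := by
    rw [← Finset.sum_sub_distrib]
    apply sum_abs_le
    intro h
    rw [← Finset.sum_sub_distrib]
    apply sum_abs_le
    intro k
    have key : η h k * B i h k * z h * z k - η h k * B i h k * w h * w k
        = η h k * B i h k * (z h * z k - w h * w k) := by ring
    rw [key, abs_mul, abs_mul, abs_of_nonneg (hη h k), abs_of_nonneg (hB i h k)]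
    have hb1 : η h k * B i h k ≤ ηbar := by nlinarith [hη h k, hηle h k, hB i h k, hB1 i h k]
    have hp : |z h * z k - w h * w k| ≤ R * d + R * d :=
      prod_est (hz h) (hw k) (hzw h) (hzw k)
    exact mul_le_mul hb1 hp (abs_nonneg _) hηb
  have hSw : |∑ k, η i k * w k| ≤ (n:ℝ) * (ηbar * R) := by
    apply sum_abs_le; intro k
    rw [abs_mul, abs_of_nonneg (hη i k)]
    exact mul_le_mul (hηle i k) (hw k) (abs_nonneg _) hηb
  have hSd : |(∑ k, η i k * z k) - (∑ k, η i k * w k)| ≤ (n:ℝ) * (ηbar * d) := by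
    rw [← Finset.sum_sub_distrib]
    apply sum_abs_le; intro k
    have key : η i k * z k - η i k * w k = η i k * (z k - w k) := by ring
    rw [key, abs_mul, abs_of_nonneg (hη i k)]
    exact mul_le_mul (hηle i k) (hzw k) (abs_nonneg _) hηb
  have e2 : |z i * (∑ k, η i k * z k) - w i * (∑ k, η i k * w k)|
      ≤ R * ((n:ℝ) * (ηbar * d)) + (n:ℝ) * (ηbar * R) * d :=
    prod_est (hz i) hSw (hzw i) hSd
  have hTw : |∑ k, η i k * c i k * w k| ≤ (n:ℝ) * (ηbar * (Mc * R)) := by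
    apply sum_abs_le; intro k
    rw [abs_mul, abs_mul, abs_of_nonneg (hη i k)]
    have h' : η i k * |c i k| ≤ ηbar * Mc := mul_le_mul (hηle i k) (hc i k) (abs_nonneg _) hηb
    calc η i k * |c i k| * |w k| ≤ ηbar * Mc * R :=
          mul_le_mul h' (hw k) (abs_nonneg _) (by positivity)
      _ = ηbar * (Mc * R) := by ring
  have hTd : |(∑ k, η i k * c i k * z k) - (∑ k, η i k * c i k * w k)|
      ≤ (n:ℝ) * (ηbar * (Mc * d)) := by
    rw [← Finset.sum_sub_distrib]
    apply sum_abs_le; intro k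
    have key : η i k * c i k * z k - η i k * c i k * w k = η i k * c i k * (z k - w k) := by ring
    rw [key, abs_mul, abs_mul, abs_of_nonneg (hη i k)]
    have h' : η i k * |c i k| ≤ ηbar * Mc := mul_le_mul (hηle i k) (hc i k) (abs_nonneg _) hηb
    calc η i k * |c i k| * |z k - w k| ≤ ηbar * Mc * d :=
          mul_le_mul h' (hzw k) (abs_nonneg _) (by positivity)
      _ = ηbar * (Mc * d) := by ring
  have e3 : |z i * (∑ k, η i k * c i k * z k) - w i * (∑ k, η i k * c i k * w k)|
      ≤ R * ((n:ℝ) * (ηbar * (Mc * d))) + (n:ℝ) * (ηbar * (Mc * R)) * d :=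
    prod_est (hz i) hTw (hzw i) hTd
  have e4 : |l i * z i - l i * w i| ≤ Mc * d := by
    have key : l i * z i - l i * w i = l i * (z i - w i) := by ring
    rw [key, abs_mul]
    exact mul_le_mul (hl i) (hzw i) (abs_nonneg _) hMc
  have key : Q η B c l z i - Q η B c l w i
      = ((∑ h, ∑ k, η h k * B i h k * z h * z k) - (∑ h, ∑ k, η h k * B i h k * w h * w k))
        - (z i * (∑ k, η i k * z k) - w i * (∑ k, η i k * w k))
        + (z i * (∑ k, η i k * c i k * z k) - w i * (∑ k, η i k * c i k * w k))
        + (l i * z i - l i * w i) := by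
    simp only [Q]; ring
  rw [key]
  have total := calc
    |((∑ h, ∑ k, η h k * B i h k * z h * z k) - (∑ h, ∑ k, η h k * B i h k * w h * w k))
        - (z i * (∑ k, η i k * z k) - w i * (∑ k, η i k * w k))
        + (z i * (∑ k, η i k * c i k * z k) - w i * (∑ k, η i k * c i k * w k))
        + (l i * z i - l i * w i)|
      ≤ |((∑ h, ∑ k, η h k * B i h k * z h * z k) - (∑ h, ∑ k, η h k * B i h k * w h * w k))
        - (z i * (∑ k, η i k * z k) - w i * (∑ k, η i k * w k))
        + (z i * (∑ k, η i k * c i k * z k) - w i * (∑ k, η i k * c i k * w k))|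
        + |l i * z i - l i * w i| := abs_add_le _ _
    _ ≤ (|((∑ h, ∑ k, η h k * B i h k * z h * z k) - (∑ h, ∑ k, η h k * B i h k * w h * w k))
        - (z i * (∑ k, η i k * z k) - w i * (∑ k, η i k * w k))|
        + |z i * (∑ k, η i k * c i k * z k) - w i * (∑ k, η i k * c i k * w k)|)
        + |l i * z i - l i * w i| := by gcongr; exact abs_add_le _ _
    _ ≤ ((|(∑ h, ∑ k, η h k * B i h k * z h * z k) - (∑ h, ∑ k, η h k * B i h k * w h * w k)|
        + |z i * (∑ k, η i k * z k) - w i * (∑ k, η i k * w k)|)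
        + |z i * (∑ k, η i k * c i k * z k) - w i * (∑ k, η i k * c i k * w k)|)
        + |l i * z i - l i * w i| := by gcongr; exact abs_sub _ _
    _ ≤ ((n:ℝ) * ((n:ℝ) * (ηbar * (R * d + R * d)))
        + (R * ((n:ℝ) * (ηbar * d)) + (n:ℝ) * (ηbar * R) * d)
        + (R * ((n:ℝ) * (ηbar * (Mc * d))) + (n:ℝ) * (ηbar * (Mc * R)) * d))
        + Mc * d := by gcongr
  calc |_| ≤ _ := total
    _ = Kbnd n ηbar Mc R * d := by unfold Kbnd; ring

end Est
end Stmt0Aux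



/-- Theorem 1 of the paper: local existence, uniqueness, positivity and boundedness
for the Cauchy problem of the non-conservative kinetic framework. -/
theorem stmt_0 (n : ℕ) (hn : 1 ≤ n)
    (η : Fin n → Fin n → ℝ) (B : Fin n → Fin n → Fin n → ℝ)
    (μ : Fin n → Fin n → ℝ → ℝ) (lam : Fin n → ℝ → ℝ)
    (hη : ∀ h k, 0 ≤ η h k) (hB : ∀ i h k, 0 ≤ B i h k)
    (hBsum : ∀ h k, ∑ i, B i h k = 1)
    (hμcont : ∀ h k, ContinuousOn (μ h k) (Ici 0))
    (hlamcont : ∀ i, ContinuousOn (lam i) (Ici 0))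
    (ηbar : ℝ) (hηbar : 0 < ηbar) (hηle : ∀ h k, η h k ≤ ηbar)
    (μbar : ℝ) (hμbar : 0 < μbar) (hμle : ∀ h k t, 0 < t → μ h k t ≤ μbar)
    (lambar : ℝ) (hlambar : 0 < lambar) (hlamle : ∀ i t, 0 < t → |lam i t| ≤ lambar)
    (f0 : Fin n → ℝ) (hf0 : ∀ i, 0 ≤ f0 i) :
    ∃ t₀ > (0:ℝ), ∃ f : ℝ → Fin n → ℝ,
      (f 0 = f0 ∧
        (∀ t ∈ Icc (0:ℝ) t₀, ∀ i,
          HasDerivWithinAt (fun s => f s i)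
            ((∑ h, ∑ k, η h k * B i h k * f t h * f t k)
              - f t i * (∑ k, η i k * f t k)
              + f t i * (∑ k, η i k * μ i k t * f t k)
              + lam i t * f t i) (Icc (0:ℝ) t₀) t) ∧
        (∀ t ∈ Icc (0:ℝ) t₀, ∀ i, 0 ≤ f t i) ∧
        (∃ M : ℝ, ∀ t ∈ Icc (0:ℝ) t₀, ∀ i, |f t i| ≤ M)) ∧
      (∀ g : ℝ → Fin n → ℝ,
        g 0 = f0 →
        (∀ t ∈ Icc (0:ℝ) t₀, ∀ i,
          HasDerivWithinAt (fun s => g s i)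
            ((∑ h, ∑ k, η h k * B i h k * g t h * g t k)
              - g t i * (∑ k, η i k * g t k)
              + g t i * (∑ k, η i k * μ i k t * g t k)
              + lam i t * g t i) (Icc (0:ℝ) t₀) t) →
        ∀ t ∈ Icc (0:ℝ) t₀, g t = f t) := by
  classical
  have i0 : Fin n := ⟨0, hn⟩
  -- B bounded by 1
  have hB1 : ∀ i h k, B i h k ≤ 1 := by
    intro i h k
    rw [← hBsum h k]
    exact Finset.single_le_sum (f := fun i' => B i' h k) (fun i' _ => hB i' h k)
      (Finset.mem_univ i)
  -- uniform bound Mc for μ and lam on [0,1]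
  obtain ⟨Mc, hMcμ, hMclam, hMc0⟩ :
      ∃ Mc : ℝ, (∀ h k, ∀ t ∈ Icc (0:ℝ) 1, |μ h k t| ≤ Mc) ∧
        (∀ i, ∀ t ∈ Icc (0:ℝ) 1, |lam i t| ≤ Mc) ∧ 0 ≤ Mc := by
    set φ : ℝ → ℝ := fun t => (∑ h, ∑ k, |μ h k t|) + ∑ i, |lam i t| with hφdef
    have hφc : ContinuousOn φ (Icc (0:ℝ) 1) := by
      apply ContinuousOn.add
      · exact Stmt0Aux.contOn_sum _ fun h _ => Stmt0Aux.contOn_sum _ fun k _ =>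
          ((hμcont h k).mono (fun x hx => hx.1)).abs
      · exact Stmt0Aux.contOn_sum _ fun i _ => ((hlamcont i).mono (fun x hx => hx.1)).abs
    obtain ⟨C, hC⟩ := isCompact_Icc.exists_bound_of_continuousOn hφc
    have hφnn : ∀ t, 0 ≤ φ t := by
      intro t
      apply add_nonneg
      · exact Finset.sum_nonneg fun h _ => Finset.sum_nonneg fun k _ => abs_nonneg _
      · exact Finset.sum_nonneg fun i _ => abs_nonneg _
    have hφle : ∀ t ∈ Icc (0:ℝ) 1, φ t ≤ C := by
      intro t ht
      have := hC t ht
      rwa [Real.norm_eq_abs, abs_of_nonneg (hφnn t)] at this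
    refine ⟨C, ?_, ?_, ?_⟩
    · intro h k t ht
      refine le_trans ?_ (hφle t ht)
      have h1 : |μ h k t| ≤ ∑ k', |μ h k' t| :=
        Finset.single_le_sum (f := fun k' => |μ h k' t|) (fun _ _ => abs_nonneg _)
          (Finset.mem_univ k)
      have h2 : (∑ k', |μ h k' t|) ≤ ∑ h', ∑ k', |μ h' k' t| :=
        Finset.single_le_sum (f := fun h' => ∑ k', |μ h' k' t|)
          (fun _ _ => Finset.sum_nonneg fun _ _ => abs_nonneg _) (Finset.mem_univ h)
      have h3 : (∑ h', ∑ k', |μ h' k' t|) ≤ φ t :=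
        le_add_of_nonneg_right (Finset.sum_nonneg fun i _ => abs_nonneg _)
      linarith
    · intro i t ht
      refine le_trans ?_ (hφle t ht)
      have h1 : |lam i t| ≤ ∑ i', |lam i' t| :=
        Finset.single_le_sum (f := fun i' => |lam i' t|) (fun _ _ => abs_nonneg _)
          (Finset.mem_univ i)
      have h3 : (∑ i', |lam i' t|) ≤ φ t :=
        le_add_of_nonneg_left (Finset.sum_nonneg fun h _ =>
          Finset.sum_nonneg fun k _ => abs_nonneg _)
      linarith
    · exact le_trans (abs_nonneg (lam i0 0)) (by
        refine le_trans ?_ (hφle 0 ⟨le_rfl, zero_le_one⟩)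
        have h1 : |lam i0 0| ≤ ∑ i', |lam i' 0| :=
          Finset.single_le_sum (f := fun i' => |lam i' 0|) (fun _ _ => abs_nonneg _)
            (Finset.mem_univ i0)
        have h3 : (∑ i', |lam i' 0|) ≤ φ 0 :=
          le_add_of_nonneg_left (Finset.sum_nonneg fun h _ =>
            Finset.sum_nonneg fun k _ => abs_nonneg _)
        linarith)
  have hηb : (0:ℝ) ≤ ηbar := hηbar.le
  -- constants
  set Rb : ℝ := ‖f0‖ + 1 with hRbdef
  have hRb : (0:ℝ) ≤ Rb := by positivity
  set K : ℝ := Stmt0Aux.Kbnd n ηbar Mc Rb with hKdef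
  have hK0 : 0 ≤ K := by
    rw [hKdef]; unfold Stmt0Aux.Kbnd; positivity
  set C : ℝ := Stmt0Aux.Cbnd n ηbar Mc Rb + 1 with hCdef
  have hC0 : 0 < C := by
    rw [hCdef]; unfold Stmt0Aux.Cbnd; positivity
  set t₀ : ℝ := min 1 (1 / C) with ht₀def
  have ht₀pos : 0 < t₀ := lt_min one_pos (by positivity)
  have ht₀le1 : t₀ ≤ 1 := min_le_left _ _
  have hCt₀ : C * t₀ ≤ 1 := by
    have h1 : t₀ ≤ 1 / C := min_le_right _ _
    calc C * t₀ ≤ C * (1 / C) := by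
          exact mul_le_mul_of_nonneg_left h1 hC0.le
      _ = 1 := by field_simp
  have hsub01 : Icc (0:ℝ) t₀ ⊆ Icc (0:ℝ) 1 := Icc_subset_Icc_right ht₀le1
  -- the truncated vector field
  set G : ℝ → (Fin n → ℝ) → (Fin n → ℝ) := fun t x =>
    Stmt0Aux.Q η B (fun i k => μ i k t) (fun i => lam i t) (fun j => max (x j) 0) with hGdef
  -- norm facts
  have hball : ∀ x : Fin n → ℝ, x ∈ Metric.closedBall f0 1 → ∀ j, |x j| ≤ Rb := by
    intro x hx j
    have h1 : ‖x - f0‖ ≤ 1 := by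
      rwa [Metric.mem_closedBall, dist_eq_norm] at hx
    have h2 : |x j| ≤ ‖x‖ := by
      have := norm_le_pi_norm x j
      rwa [Real.norm_eq_abs] at this
    have h3 : ‖x‖ ≤ ‖f0‖ + 1 := by
      calc ‖x‖ = ‖x - f0 + f0‖ := by ring_nf
        _ ≤ ‖x - f0‖ + ‖f0‖ := norm_add_le _ _
        _ ≤ 1 + ‖f0‖ := by linarith
        _ = ‖f0‖ + 1 := by ring
    rw [hRbdef]; linarith
  have hqabs : ∀ a : ℝ, |max a 0| ≤ |a| := by
    intro a
    rw [abs_of_nonneg (le_max_right a 0)]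
    exact max_le (le_abs_self a) (abs_nonneg a)
  -- Picard-Lindelöf
  have ht0mem : (0:ℝ) ∈ Icc (0:ℝ) t₀ := ⟨le_rfl, ht₀pos.le⟩
  have hpl : IsPicardLindelof G (⟨0, ht0mem⟩ : Icc (0:ℝ) t₀) f0 1 0 C.toNNReal K.toNNReal := by
    constructor
    · -- Lipschitz
      intro t ht
      rw [lipschitzOnWith_iff_dist_le_mul]
      intro x hx y hy
      rw [dist_eq_norm, dist_eq_norm]
      have hd0 : 0 ≤ (K.toNNReal : ℝ) * ‖x - y‖ := by positivity
      apply (pi_norm_le_iff_of_nonneg hd0).2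
      intro i
      rw [Pi.sub_apply, Real.norm_eq_abs]
      have hKco : (K.toNNReal : ℝ) = K := Real.coe_toNNReal K hK0
      rw [hKco]
      have hle := Stmt0Aux.Q_lip hη hηle hηb hB hB1
        (c := fun i k => μ i k t) (l := fun i => lam i t)
        (fun i k => hMcμ i k t (hsub01 ht)) (fun i => hMclam i t (hsub01 ht)) hRb hMc0
        (z := fun j => max (x j) 0) (w := fun j => max (y j) 0) (d := ‖x - y‖)
        (fun j => le_trans (hqabs (x j)) (hball x hx j))
        (fun j => le_trans (hqabs (y j)) (hball y hy j))
        (fun j => by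
          refine le_trans (abs_max_sub_max_le_abs (x j) (y j) 0) ?_
          have := norm_le_pi_norm (x - y) j
          rwa [Real.norm_eq_abs, Pi.sub_apply] at this) i
      exact hle
    · -- continuity in t
      intro x hx
      apply continuousOn_pi.2
      intro i
      simp only [hGdef, Stmt0Aux.Q]
      apply ContinuousOn.add
      apply ContinuousOn.add
      apply ContinuousOn.sub
      · exact continuousOn_const
      · exact continuousOn_const
      · apply ContinuousOn.mul continuousOn_const
        apply Stmt0Aux.contOn_sum
        intro k _
        exact (continuousOn_const.mul ((hμcont i k).mono
          (fun u hu => hu.1))).mul continuousOn_const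
      · exact ((hlamcont i).mono (fun u hu => hu.1)).mul continuousOn_const
    · -- norm bound
      intro t ht x hx
      rw [Real.coe_toNNReal C hC0.le]
      have hd0 : (0:ℝ) ≤ C := hC0.le
      apply (pi_norm_le_iff_of_nonneg hd0).2
      intro i
      rw [Real.norm_eq_abs]
      refine le_trans (Stmt0Aux.Q_bound hη hηle hηb hB hB1
        (c := fun i k => μ i k t) (l := fun i => lam i t)
        (fun i k => hMcμ i k t (hsub01 ht)) (fun i => hMclam i t (hsub01 ht)) hRb hMc0
        (fun j => le_trans (hqabs (x j)) (hball x hx j)) i) ?_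
      rw [hCdef]; linarith
    · -- C * max ... ≤ R
      have : max (t₀ - 0) (0 - 0) = t₀ := by
        rw [sub_zero, sub_zero]
        exact max_eq_left ht₀pos.le
      show (C.toNNReal:ℝ) * max (t₀ - 0) (0 - 0) ≤ ((1 : NNReal) : ℝ) - ((0 : NNReal) : ℝ)
      rw [this]
      rw [Real.coe_toNNReal C hC0.le, NNReal.coe_one, NNReal.coe_zero, sub_zero]
      exact hCt₀
  obtain ⟨f, hfinit, hfde⟩ := hpl.exists_eq_forall_mem_Icc_hasDerivWithinAt₀
  have hfinit : f 0 = f0 := hfinit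
  -- basic consequences
  have hfdi : ∀ t ∈ Icc (0:ℝ) t₀, ∀ i,
      HasDerivWithinAt (fun s => f s i) (G t (f t) i) (Icc (0:ℝ) t₀) t :=
    fun t ht i => hasDerivWithinAt_pi.1 (hfde t ht) i
  have hfcont : ContinuousOn f (Icc (0:ℝ) t₀) :=
    fun t ht => (hfde t ht).continuousWithinAt
  have hfconti : ∀ i, ContinuousOn (fun s => f s i) (Icc (0:ℝ) t₀) :=
    fun i t ht => (hfdi t ht i).continuousWithinAt
  -- positivity
  have hpos : ∀ t ∈ Icc (0:ℝ) t₀, ∀ i, 0 ≤ f t i := by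
    by_contra hcon
    push_neg at hcon
    obtain ⟨t₁, ht₁, i, hneg⟩ := hcon
    have ht₁pos : 0 < t₁ := by
      rcases lt_or_eq_of_le ht₁.1 with h | h
      · exact h
      · exfalso
        rw [← h] at hneg
        rw [hfinit] at hneg
        exact absurd (hf0 i) (not_le.2 hneg)
    set S : Set ℝ := Icc 0 t₁ ∩ (fun u => f u i) ⁻¹' Ici 0 with hSdef
    have hScl : IsClosed S :=
      ContinuousOn.preimage_isClosed_of_isClosed
        ((hfconti i).mono (Icc_subset_Icc_right ht₁.2)) isClosed_Icc isClosed_Ici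
    have hS0 : (0:ℝ) ∈ S := ⟨⟨le_rfl, ht₁pos.le⟩, by
      simp only [mem_preimage, mem_Ici]
      rw [hfinit]; exact hf0 i⟩
    have hSbdd : BddAbove S := ⟨t₁, fun u hu => hu.1.2⟩
    set s : ℝ := sSup S with hsdef
    have hsS : s ∈ S := hScl.csSup_mem ⟨0, hS0⟩ hSbdd
    have hs1 : s ∈ Icc (0:ℝ) t₁ := hsS.1
    have hfs0 : 0 ≤ f s i := hsS.2
    have hst₁ : s < t₁ := by
      rcases lt_or_eq_of_le hs1.2 with h | h
      · exact h
      · exfalso; rw [h] at hfs0; exact absurd hfs0 (not_le.2 hneg)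
    have hIneg : ∀ u ∈ Ioc s t₁, f u i < 0 := by
      intro u hu
      by_contra hge
      push_neg at hge
      have huS : u ∈ S := ⟨⟨le_trans hs1.1 hu.1.le, hu.2⟩, hge⟩
      exact absurd (le_csSup hSbdd huS) (not_le.2 hu.1)
    have hsmem : s ∈ Icc (0:ℝ) t₀ := ⟨hs1.1, le_trans hs1.2 ht₁.2⟩
    have hfs_eq : f s i = 0 := by
      refine le_antisymm ?_ hfs0
      have hsub : Ioc s t₁ ⊆ Icc (0:ℝ) t₀ :=
        fun u hu => ⟨le_trans hs1.1 hu.1.le, le_trans hu.2 ht₁.2⟩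
      have hcw : ContinuousWithinAt (fun u => f u i) (Ioc s t₁) s :=
        ((hfconti i) s hsmem).mono hsub
      have hne : (𝓝[Ioc s t₁] s).NeBot := by
        rw [nhdsWithin_Ioc_eq_nhdsGT hst₁]
        infer_instance
      refine le_of_tendsto hcw ?_
      filter_upwards [self_mem_nhdsWithin] with u hu
      exact (hIneg u hu).le
    -- f is monotone on [s, t₁]
    have hmono : MonotoneOn (fun u => f u i) (Icc s t₁) := by
      apply monotoneOn_of_deriv_nonneg (convex_Icc s t₁)
      · exact (hfconti i).mono (fun u hu => ⟨le_trans hs1.1 hu.1, le_trans hu.2 ht₁.2⟩)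
      · rw [interior_Icc]
        intro u hu
        have humem : Icc (0:ℝ) t₀ ∈ 𝓝 u :=
          Icc_mem_nhds (lt_of_le_of_lt hs1.1 hu.1) (lt_of_lt_of_le hu.2 ht₁.2)
        exact ((hfdi u ⟨(lt_of_le_of_lt hs1.1 hu.1).le, (lt_of_lt_of_le hu.2 ht₁.2).le⟩
          i).hasDerivAt humem).differentiableAt.differentiableWithinAt
      · rw [interior_Icc]
        intro u hu
        have humem : Icc (0:ℝ) t₀ ∈ 𝓝 u :=
          Icc_mem_nhds (lt_of_le_of_lt hs1.1 hu.1) (lt_of_lt_of_le hu.2 ht₁.2)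
        have hda := (hfdi u ⟨(lt_of_le_of_lt hs1.1 hu.1).le, (lt_of_lt_of_le hu.2 ht₁.2).le⟩
          i).hasDerivAt humem
        rw [hda.deriv]
        have hmax0 : max (f u i) 0 = 0 := max_eq_right (hIneg u ⟨hu.1, hu.2.le⟩).le
        simp only [hGdef, Stmt0Aux.Q, hmax0, zero_mul, mul_zero, sub_zero, add_zero]
        exact Finset.sum_nonneg fun h _ => Finset.sum_nonneg fun k _ =>
          mul_nonneg (mul_nonneg (mul_nonneg (hη h k) (hB i h k)) (le_max_right _ _))
            (le_max_right _ _)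
    have := hmono ⟨le_rfl, hst₁.le⟩ ⟨hst₁.le, le_rfl⟩ hst₁.le
    simp only [hfs_eq] at this
    exact absurd this (not_le.2 hneg)
  -- stated equation form
  have hfeq : ∀ t ∈ Icc (0:ℝ) t₀, ∀ i,
      HasDerivWithinAt (fun s => f s i)
        ((∑ h, ∑ k, η h k * B i h k * f t h * f t k)
          - f t i * (∑ k, η i k * f t k)
          + f t i * (∑ k, η i k * μ i k t * f t k)
          + lam i t * f t i) (Icc (0:ℝ) t₀) t := by
    intro t ht i
    have hz : ∀ j, max (f t j) 0 = f t j := fun j => max_eq_left (hpos t ht j)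
    have h1 := hfdi t ht i
    have hQ : G t (f t) i = (∑ h, ∑ k, η h k * B i h k * f t h * f t k)
        - f t i * (∑ k, η i k * f t k)
        + f t i * (∑ k, η i k * μ i k t * f t k) + lam i t * f t i := by
      simp only [hGdef, hz, Stmt0Aux.Q]
    rwa [hQ] at h1
  -- boundedness
  obtain ⟨M, hM⟩ := isCompact_Icc.exists_bound_of_continuousOn hfcont
  have hbdd : ∀ t ∈ Icc (0:ℝ) t₀, ∀ i, |f t i| ≤ M := by
    intro t ht i
    have h1 : |f t i| ≤ ‖f t‖ := by
      have := norm_le_pi_norm (f t) i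
      rwa [Real.norm_eq_abs] at this
    exact h1.trans (hM t ht)
  -- uniqueness
  have huniq : ∀ u v : ℝ → Fin n → ℝ,
      (∀ t ∈ Icc (0:ℝ) t₀, ∀ i,
        HasDerivWithinAt (fun s => u s i)
          (Stmt0Aux.Q η B (fun i k => μ i k t) (fun i => lam i t) (u t) i)
          (Icc (0:ℝ) t₀) t) →
      (∀ t ∈ Icc (0:ℝ) t₀, ∀ i,
        HasDerivWithinAt (fun s => v s i)
          (Stmt0Aux.Q η B (fun i k => μ i k t) (fun i => lam i t) (v t) i)
          (Icc (0:ℝ) t₀) t) →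
      u 0 = v 0 → EqOn u v (Icc (0:ℝ) t₀) := by
    intro u v hu hv huv0
    have hud : ∀ t ∈ Icc (0:ℝ) t₀, HasDerivWithinAt u
        (Stmt0Aux.Q η B (fun i k => μ i k t) (fun i => lam i t) (u t)) (Icc (0:ℝ) t₀) t :=
      fun t ht => hasDerivWithinAt_pi.2 fun i => hu t ht i
    have hvd : ∀ t ∈ Icc (0:ℝ) t₀, HasDerivWithinAt v
        (Stmt0Aux.Q η B (fun i k => μ i k t) (fun i => lam i t) (v t)) (Icc (0:ℝ) t₀) t :=
      fun t ht => hasDerivWithinAt_pi.2 fun i => hv t ht i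
    have hucont : ContinuousOn u (Icc (0:ℝ) t₀) := fun t ht => (hud t ht).continuousWithinAt
    have hvcont : ContinuousOn v (Icc (0:ℝ) t₀) := fun t ht => (hvd t ht).continuousWithinAt
    obtain ⟨Mu, hMu⟩ := isCompact_Icc.exists_bound_of_continuousOn hucont
    obtain ⟨Mv, hMv⟩ := isCompact_Icc.exists_bound_of_continuousOn hvcont
    set Rg : ℝ := max Mu Mv with hRgdef
    have hRg0 : 0 ≤ Rg :=
      le_trans (norm_nonneg (u 0)) ((hMu 0 ⟨le_rfl, ht₀pos.le⟩).trans (le_max_left _ _))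
    set cl : ℝ → ℝ := fun t => max 0 (min t t₀) with hcldef
    have hclmem : ∀ t, cl t ∈ Icc (0:ℝ) t₀ :=
      fun t => ⟨le_max_left _ _, max_le ht₀pos.le (min_le_right _ _)⟩
    have hcl_eq : ∀ t ∈ Icc (0:ℝ) t₀, cl t = t := by
      intro t ht
      simp only [hcldef]
      rw [min_eq_left ht.2, max_eq_right ht.1]
    set W : ℝ → (Fin n → ℝ) → (Fin n → ℝ) := fun t x =>
      Stmt0Aux.Q η B (fun i k => μ i k (cl t)) (fun i => lam i (cl t)) x with hWdef
    set Kg : ℝ := Stmt0Aux.Kbnd n ηbar Mc Rg with hKgdef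
    have hKg0 : 0 ≤ Kg := by rw [hKgdef]; unfold Stmt0Aux.Kbnd; positivity
    have hWlip : ∀ t, LipschitzOnWith Kg.toNNReal (W t) (Metric.closedBall 0 Rg) := by
      intro t
      rw [lipschitzOnWith_iff_dist_le_mul]
      intro x hx y hy
      rw [dist_eq_norm, dist_eq_norm]
      have hd0 : 0 ≤ (Kg.toNNReal : ℝ) * ‖x - y‖ := by positivity
      apply (pi_norm_le_iff_of_nonneg hd0).2
      intro i
      rw [Pi.sub_apply, Real.norm_eq_abs, Real.coe_toNNReal Kg hKg0]
      have hxb : ∀ j, |x j| ≤ Rg := by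
        intro j
        have h2 : |x j| ≤ ‖x‖ := by
          have := norm_le_pi_norm x j
          rwa [Real.norm_eq_abs] at this
        exact h2.trans (mem_closedBall_zero_iff.1 hx)
      have hyb : ∀ j, |y j| ≤ Rg := by
        intro j
        have h2 : |y j| ≤ ‖y‖ := by
          have := norm_le_pi_norm y j
          rwa [Real.norm_eq_abs] at this
        exact h2.trans (mem_closedBall_zero_iff.1 hy)
      exact Stmt0Aux.Q_lip hη hηle hηb hB hB1
        (fun i' k => hMcμ i' k (cl t) (hsub01 (hclmem t)))
        (fun i' => hMclam i' (cl t) (hsub01 (hclmem t))) hRg0 hMc0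
        hxb hyb
        (fun j => by
          have := norm_le_pi_norm (x - y) j
          rwa [Real.norm_eq_abs, Pi.sub_apply] at this) i
    have hmem_nhds : ∀ t ∈ Ico (0:ℝ) t₀, Icc (0:ℝ) t₀ ∈ 𝓝[≥] t := by
      intro t ht
      exact Filter.mem_of_superset (Icc_mem_nhdsGE_of_mem ⟨le_rfl, ht.2⟩)
        (Icc_subset_Icc_left ht.1)
    have hud' : ∀ t ∈ Ico (0:ℝ) t₀, HasDerivWithinAt u (W t (u t)) (Ici t) t := by
      intro t ht
      have h1 := (hud t ⟨ht.1, ht.2.le⟩).mono_of_mem_nhdsWithin (hmem_nhds t ht)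
      have : W t (u t) = Stmt0Aux.Q η B (fun i k => μ i k t) (fun i => lam i t) (u t) := by
        simp only [hWdef, hcl_eq t ⟨ht.1, ht.2.le⟩]
      rwa [this]
    have hvd' : ∀ t ∈ Ico (0:ℝ) t₀, HasDerivWithinAt v (W t (v t)) (Ici t) t := by
      intro t ht
      have h1 := (hvd t ⟨ht.1, ht.2.le⟩).mono_of_mem_nhdsWithin (hmem_nhds t ht)
      have : W t (v t) = Stmt0Aux.Q η B (fun i k => μ i k t) (fun i => lam i t) (v t) := by
        simp only [hWdef, hcl_eq t ⟨ht.1, ht.2.le⟩]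
      rwa [this]
    have hus : ∀ t ∈ Ico (0:ℝ) t₀, u t ∈ Metric.closedBall (0 : Fin n → ℝ) Rg :=
      fun t ht => mem_closedBall_zero_iff.2 ((hMu t ⟨ht.1, ht.2.le⟩).trans (le_max_left _ _))
    have hvs : ∀ t ∈ Ico (0:ℝ) t₀, v t ∈ Metric.closedBall (0 : Fin n → ℝ) Rg :=
      fun t ht => mem_closedBall_zero_iff.2 ((hMv t ⟨ht.1, ht.2.le⟩).trans (le_max_right _ _))
    exact ODE_solution_unique_of_mem_Icc_right (fun t _ => hWlip t) hucont hud' hus hvcont hvd' hvs huv0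
  refine ⟨t₀, ht₀pos, f, ⟨hfinit, hfeq, hpos, M, hbdd⟩, ?_⟩
  intro g hg0 hgde t ht
  have hgq : ∀ t ∈ Icc (0:ℝ) t₀, ∀ i,
      HasDerivWithinAt (fun s => g s i)
        (Stmt0Aux.Q η B (fun i k => μ i k t) (fun i => lam i t) (g t) i)
        (Icc (0:ℝ) t₀) t := fun t ht i => hgde t ht i
  have hfq : ∀ t ∈ Icc (0:ℝ) t₀, ∀ i,
      HasDerivWithinAt (fun s => f s i)
        (Stmt0Aux.Q η B (fun i k => μ i k t) (fun i => lam i t) (f t) i)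
        (Icc (0:ℝ) t₀) t := fun t ht i => hfeq t ht i
  exact huniq g f hgq hfq (by rw [hg0, hfinit]) ht
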